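/- The half-power Abel transform is injective on compactly supported measures: if μ₁ and μ₂ are finite compactly supported Borel measures on ℝ such that for every E ∈ ℝ one has ∫ √(max(E - x, 0)) dμ₁(x) = ∫ √(max(E - x, 0)) dμ₂(x), then μ₁ = μ₂. -/

import Mathlib

open MeasureTheory Set Filter Topology

noncomputable def abelC : ℝ := ∫ u in (0:ℝ)..1, Real.sqrt u * Real.sqrt (1 - u)

lemma abelC_cont : Continuous fun u : ℝ => Real.sqrt u * Real.sqrt (1 - u) :=
  Real.continuous_sqrt.mul (Real.continuous_sqrt.comp (continuous_const.sub continuous_id))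

lemma abelC_pos : 0 < abelC := by
  apply intervalIntegral.intervalIntegral_pos_of_pos_on
  · exact (abelC_cont).intervalIntegrable 0 1
  · intro x hx
    exact mul_pos (Real.sqrt_pos.2 hx.1) (Real.sqrt_pos.2 (by linarith [hx.2]))
  · norm_num

lemma beta_integral (x E : ℝ) (h : x ≤ E) :
    ∫ t in x..E, Real.sqrt (E - t) * Real.sqrt (t - x) = abelC * (E - x) ^ 2 := by
  rcases eq_or_lt_of_le h with rfl | hlt
  · simp
  have h0 : (0:ℝ) ≤ E - x := by linarith
  have hc : E - x ≠ 0 := sub_ne_zero.2 hlt.ne'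
  have key := intervalIntegral.integral_comp_mul_add (a := 0) (b := 1)
      (fun t => Real.sqrt (E - t) * Real.sqrt (t - x)) hc x
  have h1 : ∀ u : ℝ, Real.sqrt (E - ((E - x) * u + x)) * Real.sqrt ((E - x) * u + x - x)
      = (E - x) * (Real.sqrt u * Real.sqrt (1 - u)) := by
    intro u
    have e1 : E - ((E - x) * u + x) = (E - x) * (1 - u) := by ring
    have e2 : (E - x) * u + x - x = (E - x) * u := by ring
    rw [e1, e2, Real.sqrt_mul h0, Real.sqrt_mul h0]
    have hs : Real.sqrt (E - x) * Real.sqrt (E - x) = E - x := Real.mul_self_sqrt h0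
    linear_combination Real.sqrt (1 - u) * Real.sqrt u * hs
  simp only [h1, mul_zero, zero_add, mul_one] at key
  rw [intervalIntegral.integral_const_mul] at key
  rw [show E - x + x = E by ring] at key
  rw [smul_eq_mul] at key
  have key2 : (E - x) * ((E - x) * ∫ u in (0:ℝ)..1, Real.sqrt u * Real.sqrt (1 - u))
      = ∫ t in x..E, Real.sqrt (E - t) * Real.sqrt (t - x) := by
    rw [key, ← mul_assoc, mul_inv_cancel₀ hc, one_mul]
  rw [← key2, abelC]; ring

lemma kernelA (x E : ℝ) :
    (∫⁻ t, ENNReal.ofReal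
        (Real.sqrt (max (E - t) 0) * Real.sqrt (max (t - x) 0)) ∂(volume : Measure ℝ))
      = ENNReal.ofReal (abelC * max (E - x) 0 ^ 2) := by
  rcases le_or_gt E x with hle | hlt
  · have hz : ∀ t : ℝ, Real.sqrt (max (E - t) 0) * Real.sqrt (max (t - x) 0) = 0 := by
      intro t
      rcases le_or_gt t E with h1 | h1
      · have : max (t - x) 0 = 0 := max_eq_right (by linarith)
        rw [this, Real.sqrt_zero, mul_zero]
      · have : max (E - t) 0 = 0 := max_eq_right (by linarith)
        rw [this, Real.sqrt_zero, zero_mul]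
    simp only [hz, ENNReal.ofReal_zero, lintegral_zero]
    rw [max_eq_right (by linarith : E - x ≤ 0)]
    simp
  · set g : ℝ → ℝ := fun t => Real.sqrt (max (E - t) 0) * Real.sqrt (max (t - x) 0) with hg
    have hgc : Continuous g :=
      (Real.continuous_sqrt.comp ((continuous_const.sub continuous_id).max continuous_const)).mul
        (Real.continuous_sqrt.comp ((continuous_id.sub continuous_const).max continuous_const))
    have hgz : ∀ t ∉ Icc x E, g t = 0 := by
      intro t ht
      simp only [mem_Icc, not_and_or, not_le] at ht
      rcases ht with h1 | h1
      · have : max (t - x) 0 = 0 := max_eq_right (by linarith)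
        simp [hg, this]
      · have : max (E - t) 0 = 0 := max_eq_right (by linarith)
        simp [hg, this]
    have hgi : Integrable g := hgc.integrable_of_hasCompactSupport
      (HasCompactSupport.intro isCompact_Icc hgz)
    have hgnn : 0 ≤ᶠ[ae (volume : Measure ℝ)] g :=
      Filter.Eventually.of_forall fun t => mul_nonneg (Real.sqrt_nonneg _) (Real.sqrt_nonneg _)
    rw [← ofReal_integral_eq_lintegral_ofReal hgi hgnn]
    congr 1
    rw [← setIntegral_eq_integral_of_forall_compl_eq_zero hgz,
      integral_Icc_eq_integral_Ioc, ← intervalIntegral.integral_of_le hlt.le]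
    have heq : EqOn g (fun t => Real.sqrt (E - t) * Real.sqrt (t - x)) (uIcc x E) := by
      intro t ht
      rw [uIcc_of_le hlt.le] at ht
      simp only [hg, max_eq_left (by linarith [ht.2] : (0:ℝ) ≤ E - t),
        max_eq_left (by linarith [ht.1] : (0:ℝ) ≤ t - x)]
    rw [intervalIntegral.integral_congr heq, beta_integral x E hlt.le,
      max_eq_left (by linarith : (0:ℝ) ≤ E - x)]

lemma kernelB (x E : ℝ) :
    (∫⁻ t in Iio E, ENNReal.ofReal (max (t - x) 0) ∂(volume : Measure ℝ))
      = ENNReal.ofReal (max (E - x) 0 ^ 2 / 2) := by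
  rcases le_or_gt E x with hle | hlt
  · have h0 : ∫⁻ t in Iio E, ENNReal.ofReal (max (t - x) 0) ∂volume
        = ∫⁻ _ in Iio E, 0 ∂(volume : Measure ℝ) := by
      apply setLIntegral_congr_fun measurableSet_Iio
      exact fun t ht => by
        rw [max_eq_right (by linarith [mem_Iio.1 ht] : t - x ≤ 0), ENNReal.ofReal_zero]
    rw [h0, lintegral_zero, max_eq_right (by linarith : E - x ≤ 0)]
    simp
  · have hsplit : Iio E = Iic x ∪ Ioo x E := by
      ext t
      simp only [mem_Iio, mem_union, mem_Iic, mem_Ioo]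
      constructor
      · intro ht
        rcases le_or_gt t x with h1 | h1
        · exact Or.inl h1
        · exact Or.inr ⟨h1, ht⟩
      · rintro (h1 | h1)
        · linarith
        · exact h1.2
    rw [hsplit, lintegral_union measurableSet_Ioo
      (Iic_disjoint_Ioi le_rfl |>.mono_right Ioo_subset_Ioi_self)]
    have hz : ∫⁻ t in Iic x, ENNReal.ofReal (max (t - x) 0) ∂(volume : Measure ℝ) = 0 := by
      rw [setLIntegral_congr_fun measurableSet_Iic
        (fun t ht => by
          rw [max_eq_right (by linarith [mem_Iic.1 ht] : t - x ≤ 0), ENNReal.ofReal_zero])]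
      simp
    rw [hz, zero_add, restrict_Ioo_eq_restrict_Ioc]
    have hcong : ∫⁻ t in Ioc x E, ENNReal.ofReal (max (t - x) 0) ∂(volume : Measure ℝ)
        = ∫⁻ t in Ioc x E, ENNReal.ofReal (t - x) ∂(volume : Measure ℝ) := by
      apply setLIntegral_congr_fun measurableSet_Ioc
      exact fun t ht => by
        rw [max_eq_left (by linarith [(mem_Ioc.1 ht).1] : (0:ℝ) ≤ t - x)]
    rw [hcong]
    have hint : IntegrableOn (fun t => t - x) (Ioc x E) (volume : Measure ℝ) :=
      (continuous_id.sub continuous_const).integrableOn_Ioc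
    rw [← ofReal_integral_eq_lintegral_ofReal hint
      ((ae_restrict_iff' measurableSet_Ioc).2 (Filter.Eventually.of_forall
        fun t ht => by simp only [Pi.zero_apply]; linarith [(mem_Ioc.1 ht).1]))]
    congr 1
    have : ∫ t in Ioc x E, (t - x) ∂(volume : Measure ℝ) = ∫ t in x..E, (t - x) := by
      rw [intervalIntegral.integral_of_le hlt.le]
    rw [this, intervalIntegral.integral_comp_sub_right (fun u => u) x, integral_id,
      max_eq_left (by linarith : (0:ℝ) ≤ E - x)]
    ring

lemma kernelC (x t : ℝ) :
    (∫⁻ s in Iio t, (Iic s).indicator (fun _ => (1 : ENNReal)) x ∂(volume : Measure ℝ))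
      = ENNReal.ofReal (max (t - x) 0) := by
  have h1 : ∀ s : ℝ, (Iic s).indicator (fun _ => (1 : ENNReal)) x
      = (Ici x).indicator (fun _ => (1 : ENNReal)) s := by
    intro s
    simp only [indicator_apply, mem_Iic, mem_Ici]
  simp only [h1]
  rw [lintegral_indicator measurableSet_Ici, Measure.restrict_restrict measurableSet_Ici,
    Ici_inter_Iio, setLIntegral_one, Real.volume_Ico]
  rcases le_or_gt x t with h | h
  · rw [max_eq_left (by linarith : (0:ℝ) ≤ t - x)]
  · rw [max_eq_right (by linarith : t - x ≤ 0), ENNReal.ofReal_eq_zero.2 (by linarith)]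
    simp

lemma lint_ofReal_ne_top {μ : Measure ℝ} [IsFiniteMeasure μ] {f : ℝ → ℝ} {C : ℝ}
    (h : ∀ᵐ x ∂μ, f x ≤ C) : (∫⁻ x, ENNReal.ofReal (f x) ∂μ) ≠ ⊤ := by
  have hle : ∫⁻ x, ENNReal.ofReal (f x) ∂μ ≤ ∫⁻ _, ENNReal.ofReal C ∂μ :=
    lintegral_mono_ae (h.mono fun x hx => ENNReal.ofReal_le_ofReal hx)
  rw [lintegral_const] at hle
  exact ne_top_of_le_ne_top (ENNReal.mul_ne_top ENNReal.ofReal_ne_top (measure_ne_top μ _)) hle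

lemma sandwich_le (f₁ f₂ : ℝ → ENNReal) (h₁ : Monotone f₁) (h₂ : Monotone f₂)
    (hfin : ∀ t, (∫⁻ u in Iio t, f₁ u ∂(volume : Measure ℝ)) ≠ ⊤)
    (heq : ∀ t, ∫⁻ u in Iio t, f₁ u ∂(volume : Measure ℝ)
      = ∫⁻ u in Iio t, f₂ u ∂(volume : Measure ℝ))
    (hrc : ∀ s : ℝ, Tendsto (fun n : ℕ => f₂ (s + ((n : ℝ) + 1)⁻¹)) atTop (𝓝 (f₂ s)))
    (s : ℝ) : f₁ s ≤ f₂ s := by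
  have key : ∀ ε : ℝ, 0 < ε → f₁ s ≤ f₂ (s + ε) := by
    intro ε hε
    have hu : Iio s ∪ Ico s (s + ε) = Iio (s + ε) := by
      ext u
      simp only [mem_union, mem_Iio, mem_Ico]
      constructor
      · rintro (h | h)
        · linarith
        · exact h.2
      · intro h
        rcases lt_or_ge u s with h' | h'
        exacts [Or.inl h', Or.inr ⟨h', h⟩]
    have hdisj : Disjoint (Iio s) (Ico s (s + ε)) :=
      (Iio_disjoint_Ici le_rfl).mono_right Ico_subset_Ici_self
    have hs1 : ∫⁻ u in Iio (s + ε), f₁ u ∂(volume : Measure ℝ)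
        = ∫⁻ u in Iio s, f₁ u ∂volume + ∫⁻ u in Ico s (s + ε), f₁ u ∂volume := by
      rw [← hu, lintegral_union measurableSet_Ico hdisj]
    have hs2 : ∫⁻ u in Iio (s + ε), f₂ u ∂(volume : Measure ℝ)
        = ∫⁻ u in Iio s, f₂ u ∂volume + ∫⁻ u in Ico s (s + ε), f₂ u ∂volume := by
      rw [← hu, lintegral_union measurableSet_Ico hdisj]
    have hvol : volume (Ico s (s + ε)) = ENNReal.ofReal ε := by
      rw [Real.volume_Ico]; congr 1; ring
    have hlow : f₁ s * ENNReal.ofReal ε ≤ ∫⁻ u in Ico s (s + ε), f₁ u ∂volume := by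
      calc f₁ s * ENNReal.ofReal ε = ∫⁻ _ in Ico s (s + ε), f₁ s ∂(volume : Measure ℝ) := by
            rw [setLIntegral_const, hvol]
        _ ≤ ∫⁻ u in Ico s (s + ε), f₁ u ∂volume :=
            setLIntegral_mono h₁.measurable fun u hu => h₁ hu.1
    have hhigh : ∫⁻ u in Ico s (s + ε), f₂ u ∂volume ≤ f₂ (s + ε) * ENNReal.ofReal ε := by
      calc ∫⁻ u in Ico s (s + ε), f₂ u ∂volume
          ≤ ∫⁻ _ in Ico s (s + ε), f₂ (s + ε) ∂(volume : Measure ℝ) :=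
            setLIntegral_mono measurable_const fun u hu => h₂ hu.2.le
        _ = f₂ (s + ε) * ENNReal.ofReal ε := by rw [setLIntegral_const, hvol]
    have hchain : (∫⁻ u in Iio s, f₁ u ∂volume) + f₁ s * ENNReal.ofReal ε
        ≤ (∫⁻ u in Iio s, f₁ u ∂volume) + f₂ (s + ε) * ENNReal.ofReal ε := by
      calc (∫⁻ u in Iio s, f₁ u ∂volume) + f₁ s * ENNReal.ofReal ε
          ≤ (∫⁻ u in Iio s, f₁ u ∂volume) + ∫⁻ u in Ico s (s + ε), f₁ u ∂volume :=
            add_le_add_right hlow _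
        _ = ∫⁻ u in Iio (s + ε), f₁ u ∂volume := hs1.symm
        _ = ∫⁻ u in Iio (s + ε), f₂ u ∂volume := heq _
        _ = (∫⁻ u in Iio s, f₂ u ∂volume) + ∫⁻ u in Ico s (s + ε), f₂ u ∂volume := hs2
        _ = (∫⁻ u in Iio s, f₁ u ∂volume) + ∫⁻ u in Ico s (s + ε), f₂ u ∂volume := by
            rw [heq s]
        _ ≤ (∫⁻ u in Iio s, f₁ u ∂volume) + f₂ (s + ε) * ENNReal.ofReal ε :=
            add_le_add_right hhigh _
    have h2 := (ENNReal.add_le_add_iff_left (hfin s)).1 hchain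
    exact (ENNReal.mul_le_mul_iff_left ((ENNReal.ofReal_pos.2 hε).ne') ENNReal.ofReal_ne_top).1 h2
  exact ge_of_tendsto' (hrc s) fun n => key _ (by positivity)

lemma stepA (μ : Measure ℝ) [SFinite μ] (E : ℝ) :
    ∫⁻ t, ENNReal.ofReal (Real.sqrt (max (E - t) 0))
        * ∫⁻ x, ENNReal.ofReal (Real.sqrt (max (t - x) 0)) ∂μ ∂(volume : Measure ℝ)
      = ENNReal.ofReal abelC * ∫⁻ x, ENNReal.ofReal (max (E - x) 0 ^ 2) ∂μ := by
  have hcont : Continuous fun p : ℝ × ℝ =>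
      Real.sqrt (max (E - p.1) 0) * Real.sqrt (max (p.1 - p.2) 0) :=
    (Real.continuous_sqrt.comp ((continuous_const.sub continuous_fst).max continuous_const)).mul
      (Real.continuous_sqrt.comp ((continuous_fst.sub continuous_snd).max continuous_const))
  have hmeas : Measurable (Function.uncurry fun t x : ℝ =>
      ENNReal.ofReal (Real.sqrt (max (E - t) 0) * Real.sqrt (max (t - x) 0))) :=
    hcont.measurable.ennreal_ofReal
  calc ∫⁻ t, ENNReal.ofReal (Real.sqrt (max (E - t) 0))
        * ∫⁻ x, ENNReal.ofReal (Real.sqrt (max (t - x) 0)) ∂μ ∂(volume : Measure ℝ)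
      = ∫⁻ t, ∫⁻ x, ENNReal.ofReal
          (Real.sqrt (max (E - t) 0) * Real.sqrt (max (t - x) 0)) ∂μ ∂(volume : Measure ℝ) := by
        apply lintegral_congr fun t => ?_
        rw [← lintegral_const_mul' _ _ ENNReal.ofReal_ne_top]
        exact lintegral_congr fun x => (ENNReal.ofReal_mul (Real.sqrt_nonneg _)).symm
    _ = ∫⁻ x, ∫⁻ t, ENNReal.ofReal
          (Real.sqrt (max (E - t) 0) * Real.sqrt (max (t - x) 0)) ∂(volume : Measure ℝ) ∂μ :=
        lintegral_lintegral_swap hmeas.aemeasurable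
    _ = ∫⁻ x, ENNReal.ofReal (abelC * max (E - x) 0 ^ 2) ∂μ :=
        lintegral_congr fun x => kernelA x E
    _ = ENNReal.ofReal abelC * ∫⁻ x, ENNReal.ofReal (max (E - x) 0 ^ 2) ∂μ := by
        rw [← lintegral_const_mul' _ _ ENNReal.ofReal_ne_top]
        exact lintegral_congr fun x => ENNReal.ofReal_mul abelC_pos.le

lemma stepB (μ : Measure ℝ) [SFinite μ] (E : ℝ) :
    ∫⁻ t in Iio E, (∫⁻ x, ENNReal.ofReal (max (t - x) 0) ∂μ) ∂(volume : Measure ℝ)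
      = ∫⁻ x, ENNReal.ofReal (max (E - x) 0 ^ 2 / 2) ∂μ := by
  have hcont : Continuous fun p : ℝ × ℝ => max (p.1 - p.2) 0 :=
    (continuous_fst.sub continuous_snd).max continuous_const
  have hmeas : Measurable (Function.uncurry fun t x : ℝ =>
      ENNReal.ofReal (max (t - x) 0)) := hcont.measurable.ennreal_ofReal
  calc ∫⁻ t in Iio E, (∫⁻ x, ENNReal.ofReal (max (t - x) 0) ∂μ) ∂(volume : Measure ℝ)
      = ∫⁻ x, ∫⁻ t in Iio E, ENNReal.ofReal (max (t - x) 0) ∂(volume : Measure ℝ) ∂μ :=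
        lintegral_lintegral_swap hmeas.aemeasurable
    _ = ∫⁻ x, ENNReal.ofReal (max (E - x) 0 ^ 2 / 2) ∂μ :=
        lintegral_congr fun x => kernelB x E

lemma stepC (μ : Measure ℝ) [SFinite μ] (t : ℝ) :
    ∫⁻ s in Iio t, μ (Iic s) ∂(volume : Measure ℝ)
      = ∫⁻ x, ENNReal.ofReal (max (t - x) 0) ∂μ := by
  have hmeas : Measurable (Function.uncurry fun s x : ℝ =>
      (Iic s).indicator (fun _ => (1 : ENNReal)) x) := by
    have : (Function.uncurry fun s x : ℝ => (Iic s).indicator (fun _ => (1 : ENNReal)) x)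
        = fun p : ℝ × ℝ => if p.2 ≤ p.1 then (1 : ENNReal) else 0 := by
      ext p
      simp [Function.uncurry, indicator_apply]
    rw [this]
    exact Measurable.ite (measurableSet_le measurable_snd measurable_fst)
      measurable_const measurable_const
  calc ∫⁻ s in Iio t, μ (Iic s) ∂(volume : Measure ℝ)
      = ∫⁻ s in Iio t, (∫⁻ x, (Iic s).indicator (fun _ => (1 : ENNReal)) x ∂μ)
          ∂(volume : Measure ℝ) := by
        apply lintegral_congr fun s => ?_
        rw [lintegral_indicator measurableSet_Iic, setLIntegral_one]
    _ = ∫⁻ x, ∫⁻ s in Iio t, (Iic s).indicator (fun _ => (1 : ENNReal)) x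
          ∂(volume : Measure ℝ) ∂μ := lintegral_lintegral_swap hmeas.aemeasurable
    _ = ∫⁻ x, ENNReal.ofReal (max (t - x) 0) ∂μ := lintegral_congr fun x => kernelC x t

/-- Injectivity of the half-power Abel transform on finite compactly supported
Borel measures on `ℝ`: if `∫ √((E - x)₊) dμ₁(x) = ∫ √((E - x)₊) dμ₂(x)` for every
`E ∈ ℝ`, then `μ₁ = μ₂`. -/
theorem abel_transform_injective (μ₁ μ₂ : Measure ℝ)
    [IsFiniteMeasure μ₁] [IsFiniteMeasure μ₂]
    (hc₁ : ∃ K : Set ℝ, IsCompact K ∧ μ₁ Kᶜ = 0)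
    (hc₂ : ∃ K : Set ℝ, IsCompact K ∧ μ₂ Kᶜ = 0)
    (h : ∀ E : ℝ, ∫ x, Real.sqrt (max (E - x) 0) ∂μ₁
        = ∫ x, Real.sqrt (max (E - x) 0) ∂μ₂) :
    μ₁ = μ₂ := by
  obtain ⟨K₁, hK₁c, hK₁0⟩ := hc₁
  obtain ⟨K₂, hK₂c, hK₂0⟩ := hc₂
  obtain ⟨M, hM0, hM⟩ : ∃ M : ℝ, 0 ≤ M ∧ ∀ x ∈ K₁ ∪ K₂, |x| ≤ M := by
    obtain ⟨r, hr⟩ := (hK₁c.union hK₂c).isBounded.subset_closedBall 0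
    refine ⟨|r|, abs_nonneg r, fun x hx => ?_⟩
    have := hr hx
    rw [Metric.mem_closedBall, Real.dist_eq, sub_zero] at this
    exact this.trans (le_abs_self r)
  have hb₁ : ∀ᵐ x ∂μ₁, |x| ≤ M := by
    rw [ae_iff]
    refine measure_mono_null (fun x hx => ?_) hK₁0
    intro hxK
    exact hx (hM x (Or.inl hxK))
  have hb₂ : ∀ᵐ x ∂μ₂, |x| ≤ M := by
    rw [ae_iff]
    refine measure_mono_null (fun x hx => ?_) hK₂0
    intro hxK
    exact hx (hM x (Or.inr hxK))
  -- pointwise bounds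
  have hmaxbd : ∀ t x : ℝ, |x| ≤ M → max (t - x) 0 ≤ |t| + M := by
    intro t x hx
    apply max_le
    · have := abs_le.1 hx
      have := le_abs_self t
      linarith
    · positivity
  -- Step 0 : lintegral version of the hypothesis
  have hG : ∀ t : ℝ, ∫⁻ x, ENNReal.ofReal (Real.sqrt (max (t - x) 0)) ∂μ₁
      = ∫⁻ x, ENNReal.ofReal (Real.sqrt (max (t - x) 0)) ∂μ₂ := by
    intro t
    have hcont : Continuous fun x : ℝ => Real.sqrt (max (t - x) 0) :=
      Real.continuous_sqrt.comp ((continuous_const.sub continuous_id).max continuous_const)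
    have hf₁ : (∫⁻ x, ENNReal.ofReal (Real.sqrt (max (t - x) 0)) ∂μ₁) ≠ ⊤ :=
      lint_ofReal_ne_top (hb₁.mono fun x hx => Real.sqrt_le_sqrt (hmaxbd t x hx))
    have hf₂ : (∫⁻ x, ENNReal.ofReal (Real.sqrt (max (t - x) 0)) ∂μ₂) ≠ ⊤ :=
      lint_ofReal_ne_top (hb₂.mono fun x hx => Real.sqrt_le_sqrt (hmaxbd t x hx))
    have e₁ := integral_eq_lintegral_of_nonneg_ae (μ := μ₁)
      (f := fun x => Real.sqrt (max (t - x) 0))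
      (Filter.Eventually.of_forall fun x => Real.sqrt_nonneg _) hcont.aestronglyMeasurable
    have e₂ := integral_eq_lintegral_of_nonneg_ae (μ := μ₂)
      (f := fun x => Real.sqrt (max (t - x) 0))
      (Filter.Eventually.of_forall fun x => Real.sqrt_nonneg _) hcont.aestronglyMeasurable
    have h' := h t
    rw [e₁, e₂] at h'
    exact (ENNReal.toReal_eq_toReal_iff' hf₁ hf₂).1 h'
  -- Step A : equality of integrals of (E - x)₊²
  have hG2 : ∀ E : ℝ, ∫⁻ x, ENNReal.ofReal (max (E - x) 0 ^ 2) ∂μ₁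
      = ∫⁻ x, ENNReal.ofReal (max (E - x) 0 ^ 2) ∂μ₂ := by
    intro E
    apply (ENNReal.mul_right_inj (ENNReal.ofReal_pos.2 abelC_pos).ne'
      ENNReal.ofReal_ne_top).1
    rw [← stepA μ₁ E, ← stepA μ₂ E]
    exact lintegral_congr fun t => by rw [hG t]
  have hG2half : ∀ E : ℝ, ∫⁻ x, ENNReal.ofReal (max (E - x) 0 ^ 2 / 2) ∂μ₁
      = ∫⁻ x, ENNReal.ofReal (max (E - x) 0 ^ 2 / 2) ∂μ₂ := by
    intro E
    have hr : ∀ ν : Measure ℝ, ∫⁻ x, ENNReal.ofReal (max (E - x) 0 ^ 2 / 2) ∂ν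
        = (∫⁻ x, ENNReal.ofReal (max (E - x) 0 ^ 2) ∂ν) * (2 : ENNReal)⁻¹ := by
      intro ν
      rw [← lintegral_mul_const' _ _ (by simp : ((2 : ENNReal)⁻¹) ≠ ⊤)]
      refine lintegral_congr fun x => ?_
      rw [div_eq_mul_inv, ENNReal.ofReal_mul (by positivity)]
      congr 1
      rw [ENNReal.ofReal_inv_of_pos two_pos, ENNReal.ofReal_ofNat]
    rw [hr μ₁, hr μ₂, hG2 E]
  -- Step B : equality of integrals of (t - x)₊
  have hmono : ∀ ν : Measure ℝ,
      Monotone fun t => ∫⁻ x, ENNReal.ofReal (max (t - x) 0) ∂ν := by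
    intro ν a b hab
    exact lintegral_mono fun x =>
      ENNReal.ofReal_le_ofReal (max_le_max (by linarith) le_rfl)
  have hfinB₁ : ∀ E : ℝ,
      (∫⁻ t in Iio E, (∫⁻ x, ENNReal.ofReal (max (t - x) 0) ∂μ₁) ∂(volume : Measure ℝ)) ≠ ⊤ := by
    intro E
    rw [stepB μ₁ E]
    refine lint_ofReal_ne_top (C := (|E| + M) ^ 2 / 2) (hb₁.mono fun x hx => ?_)
    have h1 := hmaxbd E x hx
    have h2 : (0:ℝ) ≤ max (E - x) 0 := le_max_right _ _
    nlinarith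
  have hfinB₂ : ∀ E : ℝ,
      (∫⁻ t in Iio E, (∫⁻ x, ENNReal.ofReal (max (t - x) 0) ∂μ₂) ∂(volume : Measure ℝ)) ≠ ⊤ := by
    intro E
    rw [stepB μ₂ E]
    refine lint_ofReal_ne_top (C := (|E| + M) ^ 2 / 2) (hb₂.mono fun x hx => ?_)
    have h1 := hmaxbd E x hx
    have h2 : (0:ℝ) ≤ max (E - x) 0 := le_max_right _ _
    nlinarith
  have hΦeq : ∀ E : ℝ,
      ∫⁻ t in Iio E, (∫⁻ x, ENNReal.ofReal (max (t - x) 0) ∂μ₁) ∂(volume : Measure ℝ)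
        = ∫⁻ t in Iio E, (∫⁻ x, ENNReal.ofReal (max (t - x) 0) ∂μ₂) ∂(volume : Measure ℝ) := by
    intro E
    rw [stepB μ₁ E, stepB μ₂ E, hG2half E]
  have hrc : ∀ (ν : Measure ℝ), IsFiniteMeasure ν → ∀ s : ℝ,
      Tendsto (fun n : ℕ => ∫⁻ x, ENNReal.ofReal (max (s + ((n : ℝ) + 1)⁻¹ - x) 0) ∂ν)
        atTop (𝓝 (∫⁻ x, ENNReal.ofReal (max (s - x) 0) ∂ν)) := by
    intro ν hfinν s
    have hub : ∀ δ : ℝ, 0 ≤ δ →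
        (∫⁻ x, ENNReal.ofReal (max (s + δ - x) 0) ∂ν)
          ≤ (∫⁻ x, ENNReal.ofReal (max (s - x) 0) ∂ν) + ENNReal.ofReal δ * ν univ := by
      intro δ hδ
      calc (∫⁻ x, ENNReal.ofReal (max (s + δ - x) 0) ∂ν)
          ≤ ∫⁻ x, (ENNReal.ofReal (max (s - x) 0) + ENNReal.ofReal δ) ∂ν := by
            refine lintegral_mono fun x => ?_
            rw [← ENNReal.ofReal_add (le_max_right _ _) hδ]
            refine ENNReal.ofReal_le_ofReal (max_le ?_ ?_)
            · have := le_max_left (s - x) 0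
              linarith
            · have := le_max_right (s - x) 0
              linarith
        _ = (∫⁻ x, ENNReal.ofReal (max (s - x) 0) ∂ν) + ENNReal.ofReal δ * ν univ := by
            rw [lintegral_add_right _ measurable_const, lintegral_const]
    refine tendsto_of_tendsto_of_tendsto_of_le_of_le tendsto_const_nhds ?_
      (fun n => hmono ν (le_add_of_nonneg_right (by positivity)))
      (fun n => hub _ (by positivity))
    have h0 : Tendsto (fun n : ℕ => ((n : ℝ) + 1)⁻¹) atTop (𝓝 0) := by
      simpa [one_div] using tendsto_one_div_add_atTop_nhds_zero_nat (𝕜 := ℝ)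
    have h1 : Tendsto (fun n : ℕ => ENNReal.ofReal (((n : ℝ) + 1)⁻¹) * ν univ)
        atTop (𝓝 0) := by
      have := ENNReal.Tendsto.mul_const (ENNReal.tendsto_ofReal h0)
        (b := ν univ) (Or.inr (measure_ne_top _ _))
      simpa using this
    have h2 := h1.const_add (∫⁻ x, ENNReal.ofReal (max (s - x) 0) ∂ν)
    simpa using h2
  have hH : ∀ t : ℝ, ∫⁻ x, ENNReal.ofReal (max (t - x) 0) ∂μ₁
      = ∫⁻ x, ENNReal.ofReal (max (t - x) 0) ∂μ₂ := by
    intro t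
    refine le_antisymm ?_ ?_
    · exact sandwich_le _ _ (hmono μ₁) (hmono μ₂) hfinB₁ hΦeq (hrc μ₂ inferInstance) t
    · exact sandwich_le _ _ (hmono μ₂) (hmono μ₁) hfinB₂ (fun E => (hΦeq E).symm)
        (hrc μ₁ inferInstance) t
  -- Step C : equality of the distribution functions
  have hmIic : ∀ s : ℝ, μ₁ (Iic s) = μ₂ (Iic s) := by
    have hmonoI : ∀ ν : Measure ℝ, Monotone fun s => ν (Iic s) :=
      fun ν a b hab => measure_mono (Iic_subset_Iic.2 hab)
    have hfinI₁ : ∀ t : ℝ, (∫⁻ s in Iio t, μ₁ (Iic s) ∂(volume : Measure ℝ)) ≠ ⊤ := by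
      intro t
      rw [stepC μ₁ t]
      exact lint_ofReal_ne_top (C := |t| + M) (hb₁.mono fun x hx => hmaxbd t x hx)
    have hfinI₂ : ∀ t : ℝ, (∫⁻ s in Iio t, μ₂ (Iic s) ∂(volume : Measure ℝ)) ≠ ⊤ := by
      intro t
      rw [stepC μ₂ t]
      exact lint_ofReal_ne_top (C := |t| + M) (hb₂.mono fun x hx => hmaxbd t x hx)
    have heqI : ∀ t : ℝ, ∫⁻ s in Iio t, μ₁ (Iic s) ∂(volume : Measure ℝ)
        = ∫⁻ s in Iio t, μ₂ (Iic s) ∂(volume : Measure ℝ) := by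
      intro t
      rw [stepC μ₁ t, stepC μ₂ t, hH t]
    have hrcI : ∀ (ν : Measure ℝ), IsFiniteMeasure ν → ∀ s : ℝ,
        Tendsto (fun n : ℕ => ν (Iic (s + ((n : ℝ) + 1)⁻¹))) atTop (𝓝 (ν (Iic s))) := by
      intro ν hfinν s
      have hanti : Antitone fun n : ℕ => Iic (s + ((n : ℝ) + 1)⁻¹) := by
        intro n m hnm
        apply Iic_subset_Iic.2
        have h1 : ((n : ℝ) + 1) ≤ ((m : ℝ) + 1) := by
          have := (Nat.cast_le (α := ℝ)).2 hnm
          linarith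
        have h2 : ((m : ℝ) + 1)⁻¹ ≤ ((n : ℝ) + 1)⁻¹ :=
          inv_anti₀ (by positivity) h1
        linarith
      have hiInter : ⋂ n : ℕ, Iic (s + ((n : ℝ) + 1)⁻¹) = Iic s := by
        ext u
        simp only [mem_iInter, mem_Iic]
        constructor
        · intro h'
          by_contra hcon
          push_neg at hcon
          obtain ⟨n, hn⟩ := exists_nat_one_div_lt (show (0:ℝ) < u - s by linarith)
          have := h' n
          rw [one_div] at hn
          linarith
        · intro h' n
          have : (0:ℝ) < ((n : ℝ) + 1)⁻¹ := by positivity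
          linarith
      have := tendsto_measure_iInter_atTop (μ := ν)
        (s := fun n : ℕ => Iic (s + ((n : ℝ) + 1)⁻¹))
        (fun n => measurableSet_Iic.nullMeasurableSet) hanti ⟨0, measure_ne_top _ _⟩
      rw [hiInter] at this
      exact this
    intro s
    refine le_antisymm ?_ ?_
    · exact sandwich_le _ _ (hmonoI μ₁) (hmonoI μ₂) hfinI₁ heqI (hrcI μ₂ inferInstance) s
    · exact sandwich_le _ _ (hmonoI μ₂) (hmonoI μ₁) hfinI₂ (fun t => (heqI t).symm)
        (hrcI μ₁ inferInstance) s
  exact Measure.ext_of_Iic μ₁ μ₂ hmIic
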